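/- arXiv:2403.12355 — 4 statements merged into one kernel-verified Lean document; each statement's English description precedes it below -/
import Mathlib

section
/- Let G be a finite nilpotent group of nilpotency class L generated by a symmetric set S ⊆ G, and let R ⊆ S contain exactly one element of {s, s⁻¹} for each s ∈ S. Fix an integer i with 2 ≤ i ≤ L. Then for every integer m with 1 ≤ m ≤ Diam_S(G_ab), every s ∈ S and all x₂, …, x_i ∈ R, the least n for which there exist u ∈ G_{i+1} and a product w of n elements of S with ρ(s^m, x₂, …, x_i) = w·u satisfies (as real numbers) n ≤ 2^{5i+6}·( 2^{2i} + L·m^{1/i} ), where m^{1/i} is the real i-th root. -/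
open scoped BigOperators
open scoped Classical

noncomputable section

/-- A subset of a group is symmetric if it is closed under taking inverses. -/
def SymmSet {G : Type*} [Group G] (S : Set G) : Prop := ∀ s : G, s ∈ S ↔ s⁻¹ ∈ S

/-- The word length of `g` with respect to `S`: the least `n` such that `g` is a product
of a list of `n` elements of `S`. -/
def wordLength {G : Type*} [Group G] (S : Set G) (g : G) : ℕ :=
  sInf {n | ∃ l : List G, (∀ x ∈ l, x ∈ S) ∧ l.length = n ∧ l.prod = g}

/-- The diameter of a subset `H` of `G` in the Cayley graph of `G` w.r.t. `S`. -/
def setDiam {G : Type*} [Group G] (S H : Set G) : ℕ := sSup (wordLength S '' H)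

/-- `Diam_S(H/N)`: the least `D` such that every `h ∈ H` can be written as `h = w * u` with
`u ∈ N` and `w` a product of at most `D` elements of `S`. -/
def quotDiam {G : Type*} [Group G] (S H N : Set G) : ℕ :=
  sInf {D | ∀ h ∈ H, ∃ l : List G, (∀ x ∈ l, x ∈ S) ∧ l.length ≤ D ∧ ∃ u ∈ N, h = l.prod * u}

/-- `G` has rank `r`: `r` is the least `n` such that some set of `n` elements of `G`
together with their inverses generates `G`. -/
def HasRank (G : Type*) [Group G] (r : ℕ) : Prop :=
  IsLeast {n | ∃ T : Finset G, T.card = n ∧ Subgroup.closure ((T : Set G) ∪ (T : Set G)⁻¹) = ⊤} r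

/-- `G` is nilpotent of nilpotency class exactly `L`; with the paper's indexing
`G_i := lowerCentralSeries G (i-1)`, this says `G_{L+1} = {1} ≠ G_L`. -/
def NilpotencyClassEq (G : Type*) [Group G] (L : ℕ) : Prop :=
  Subgroup.lowerCentralSeries (⊤ : Subgroup G) L = ⊥ ∧ Subgroup.lowerCentralSeries (⊤ : Subgroup G) (L - 1) ≠ ⊥

/-- Transition matrix of the simple random walk on the Cayley graph `Cay(G,S)`. -/
def transMatrix {G : Type*} [Group G] [Fintype G] (S : Set G) : Matrix G G ℝ :=
  fun x y => if x⁻¹ * y ∈ S then ((S.ncard : ℝ))⁻¹ else 0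

/-- Heat kernel `P_t = exp (t (K - I))` of the simple random walk on `Cay(G,S)`. -/
def heatKernel {G : Type*} [Group G] [Fintype G] (S : Set G) (t : ℝ) : Matrix G G ℝ :=
  NormedSpace.exp (t • (transMatrix S - 1))

/-- Transition matrix of the projected walk on `G ⧸ N`. -/
def quotTransMatrix {G : Type*} [Group G] (S : Set G) (N : Subgroup G) [N.Normal] :
    Matrix (G ⧸ N) (G ⧸ N) ℝ :=
  fun C C' => (({s ∈ S | C * (QuotientGroup.mk s : G ⧸ N) = C'}).ncard : ℝ) / (S.ncard : ℝ)

/-- Heat kernel of the projected walk on `G ⧸ N`. -/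
def quotHeatKernel {G : Type*} [Group G] [Fintype G] (S : Set G) (N : Subgroup G) [N.Normal]
    (t : ℝ) : Matrix (G ⧸ N) (G ⧸ N) ℝ :=
  letI : Fintype (G ⧸ N) := Fintype.ofFinite _
  NormedSpace.exp (t • (quotTransMatrix S N - 1))

/-- `ε`-mixing time of the simple random walk on `Cay(G,S)` started at the identity. -/
def mixingTime {G : Type*} [Group G] [Fintype G] (S : Set G) (ε : ℝ) : ℝ :=
  sInf {t : ℝ | 0 ≤ t ∧ (∑ y : G, |heatKernel S t 1 y - (Fintype.card G : ℝ)⁻¹|) / 2 ≤ ε}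

/-- `ε`-mixing time of the projected walk on `G ⧸ N` started at the identity coset. -/
def quotMixingTime {G : Type*} [Group G] [Fintype G] (S : Set G) (N : Subgroup G) [N.Normal]
    (ε : ℝ) : ℝ :=
  letI : Fintype (G ⧸ N) := Fintype.ofFinite _
  sInf {t : ℝ | 0 ≤ t ∧
    (∑ C : G ⧸ N, |quotHeatKernel S N t 1 C - (Nat.card (G ⧸ N) : ℝ)⁻¹|) / 2 ≤ ε}

/-- Second-largest eigenvalue of a symmetric stochastic matrix, via the variational
characterization over mean-zero functions. -/
def secondEig {X : Type*} [Fintype X] (K : Matrix X X ℝ) : ℝ :=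
  sSup {r : ℝ | ∃ f : X → ℝ, f ≠ 0 ∧ (∑ x, f x) = 0 ∧
    r = (∑ x, ∑ y, f x * K x y * f y) / (∑ x, (f x) ^ 2)}

/-- Relaxation time `1/(1-λ)`. -/
def relaxTime {X : Type*} [Fintype X] (K : Matrix X X ℝ) : ℝ := 1 / (1 - secondEig K)

/-- Relaxation time of the projected walk on `G ⧸ N`. -/
def quotRelaxTime {G : Type*} [Group G] [Fintype G] (S : Set G) (N : Subgroup G) [N.Normal] : ℝ :=
  letI : Fintype (G ⧸ N) := Fintype.ofFinite _
  relaxTime (quotTransMatrix S N)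

/-- The paper's commutator `[x,y] = x⁻¹ y⁻¹ x y`. -/
def pcomm {G : Type*} [Group G] (x y : G) : G := x⁻¹ * y⁻¹ * x * y

/-- Iterated commutator `ρ(x, y₁, …, y_k) = [⋯[[x,y₁],y₂]⋯, y_k]`. -/
def rho {G : Type*} [Group G] (x : G) (l : List G) : G := l.foldl pcomm x

/-- Word length in `G` modulo `N`: the least `n` such that `g = w * u` with `u ∈ N` and
`w` a product of `n` elements of `S`. -/
def quotLength {G : Type*} [Group G] (S N : Set G) (g : G) : ℕ :=
  sInf {n | ∃ l : List G, (∀ x ∈ l, x ∈ S) ∧ l.length = n ∧ ∃ u ∈ N, g = l.prod * u}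


section MyAuxLemmas

variable {G : Type*} [Group G]

private lemma rho_cons' (a c : G) (l : List G) : rho a (c :: l) = rho (pcomm a c) l := rfl

private lemma rho_nil' (a : G) : rho a [] = a := rfl

private lemma lcs_succ' (t : ℕ) :
    Subgroup.lowerCentralSeries (⊤ : Subgroup G) (t + 1) = ⁅Subgroup.lowerCentralSeries (⊤ : Subgroup G) t, (⊤ : Subgroup G)⁆ := rfl

open scoped commutatorElement in
private lemma pcomm_mem_left {t : ℕ} {u : G} (hu : u ∈ Subgroup.lowerCentralSeries (⊤ : Subgroup G) t) (c : G) :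
    pcomm u c ∈ Subgroup.lowerCentralSeries (⊤ : Subgroup G) (t + 1) := by
  have h : pcomm u c = ⁅u⁻¹, c⁻¹⁆ := by
    simp only [pcomm, commutatorElement_def, inv_inv]
  rw [h, lcs_succ']
  exact Subgroup.commutator_mem_commutator (inv_mem hu) (Subgroup.mem_top _)

private lemma pcomm_swap (c u : G) : pcomm c u = (pcomm u c)⁻¹ := by
  simp only [pcomm]; group

private lemma pcomm_mem_right {t : ℕ} {u : G} (hu : u ∈ Subgroup.lowerCentralSeries (⊤ : Subgroup G) t) (c : G) :
    pcomm c u ∈ Subgroup.lowerCentralSeries (⊤ : Subgroup G) (t + 1) := by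
  rw [pcomm_swap]; exact inv_mem (pcomm_mem_left hu c)

private lemma lcs_conj_mem {t : ℕ} {w : G} (hw : w ∈ Subgroup.lowerCentralSeries (⊤ : Subgroup G) t) (g : G) :
    g⁻¹ * w * g ∈ Subgroup.lowerCentralSeries (⊤ : Subgroup G) t := by
  simpa using
    Subgroup.Normal.conj_mem (inferInstance : (Subgroup.lowerCentralSeries (⊤ : Subgroup G) t).Normal) w hw g⁻¹

/-- congruence in the first argument of `pcomm`. -/
private lemma pcomm_mul_right_err {t : ℕ} (b c : G) {u : G}
    (hu : u ∈ Subgroup.lowerCentralSeries (⊤ : Subgroup G) t) :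
    ∃ w ∈ Subgroup.lowerCentralSeries (⊤ : Subgroup G) (t + 1), pcomm (b * u) c = pcomm b c * w := by
  refine ⟨pcomm (pcomm b c) u * pcomm u c,
    mul_mem (pcomm_mem_right hu _) (pcomm_mem_left hu c), ?_⟩
  simp only [pcomm]; group

/-- splitting the first argument of `pcomm`. -/
private lemma pcomm_mul_left_split {t : ℕ} {u : G} (hu : u ∈ Subgroup.lowerCentralSeries (⊤ : Subgroup G) t)
    (v c : G) :
    ∃ w ∈ Subgroup.lowerCentralSeries (⊤ : Subgroup G) (t + 2), pcomm (u * v) c = pcomm u c * pcomm v c * w := by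
  refine ⟨(pcomm v c)⁻¹ * pcomm (pcomm u c) v * pcomm v c,
    lcs_conj_mem (pcomm_mem_left (pcomm_mem_left hu c) v) _, ?_⟩
  simp only [pcomm]; group

/-- splitting the second argument of `pcomm`. -/
private lemma pcomm_mul_snd {t : ℕ} {u : G} (hu : u ∈ Subgroup.lowerCentralSeries (⊤ : Subgroup G) t) (y z : G) :
    ∃ w ∈ Subgroup.lowerCentralSeries (⊤ : Subgroup G) (t + 2),
      pcomm u (y * z) = pcomm u z * (pcomm u y * w) := by
  refine ⟨pcomm (pcomm u y) z, pcomm_mem_left (pcomm_mem_left hu y) z, ?_⟩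
  simp only [pcomm]; group

private lemma pow_err {r : ℕ} (B : G) {w : G} (hw : w ∈ Subgroup.lowerCentralSeries (⊤ : Subgroup G) r) (e : ℕ) :
    ∃ w' ∈ Subgroup.lowerCentralSeries (⊤ : Subgroup G) r, (B * w) ^ e = B ^ e * w' := by
  induction e with
  | zero => exact ⟨1, one_mem _, by simp⟩
  | succ e ih =>
    obtain ⟨w', hw', h⟩ := ih
    refine ⟨(B⁻¹ * w' * B) * w, mul_mem (lcs_conj_mem hw' B) hw, ?_⟩
    rw [pow_succ, h, pow_succ]
    generalize B ^ e = A
    group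

private lemma pcomm_pow_left {t : ℕ} {u : G} (hu : u ∈ Subgroup.lowerCentralSeries (⊤ : Subgroup G) t) (y : G) :
    ∀ c : ℕ, ∃ w ∈ Subgroup.lowerCentralSeries (⊤ : Subgroup G) (t + 2), pcomm (u ^ c) y = pcomm u y ^ c * w := by
  intro c
  induction c with
  | zero => exact ⟨1, one_mem _, by simp [pcomm]⟩
  | succ c ih =>
    obtain ⟨w, hw, h⟩ := ih
    obtain ⟨w₁, hw₁, h₁⟩ := pcomm_mul_left_split (pow_mem hu c) u y
    refine ⟨(pcomm u y)⁻¹ * w * pcomm u y * w₁,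
      mul_mem (lcs_conj_mem hw _) hw₁, ?_⟩
    rw [pow_succ u c, h₁, h, pow_succ (pcomm u y) c]
    generalize pcomm u y ^ c = A
    generalize pcomm u y = P
    group

private lemma pcomm_pow_right {t : ℕ} {u : G} (hu : u ∈ Subgroup.lowerCentralSeries (⊤ : Subgroup G) t) (y : G) :
    ∀ e : ℕ, ∃ w ∈ Subgroup.lowerCentralSeries (⊤ : Subgroup G) (t + 2), pcomm u (y ^ e) = pcomm u y ^ e * w := by
  intro e
  induction e with
  | zero => exact ⟨1, one_mem _, by simp [pcomm]⟩
  | succ e ih =>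
    obtain ⟨w, hw, h⟩ := ih
    obtain ⟨w₁, hw₁, h₁⟩ := pcomm_mul_snd hu y (y ^ e)
    refine ⟨(pcomm u y)⁻¹ * w * pcomm u y * w₁,
      mul_mem (lcs_conj_mem hw _) hw₁, ?_⟩
    rw [pow_succ' y e, h₁, h, pow_succ (pcomm u y) e]
    generalize pcomm u y ^ e = A
    generalize pcomm u y = P
    group

private lemma pcomm_pow_pow {t : ℕ} {u : G} (hu : u ∈ Subgroup.lowerCentralSeries (⊤ : Subgroup G) t) (y : G)
    (c e : ℕ) :
    ∃ w ∈ Subgroup.lowerCentralSeries (⊤ : Subgroup G) (t + 2),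
      pcomm (u ^ c) (y ^ e) = pcomm u y ^ (c * e) * w := by
  obtain ⟨w₁, hw₁, h₁⟩ := pcomm_pow_left hu (y ^ e) c
  obtain ⟨w₂, hw₂, h₂⟩ := pcomm_pow_right hu y e
  obtain ⟨w₃, hw₃, h₃⟩ := pow_err (pcomm u y ^ e) hw₂ c
  refine ⟨w₃ * w₁, mul_mem hw₃ hw₁, ?_⟩
  rw [h₁, h₂, h₃, ← pow_mul, Nat.mul_comm e c, mul_assoc]

private lemma rho_mul_err :
    ∀ (l : List G) {r : ℕ} (z : G) {w : G}, w ∈ Subgroup.lowerCentralSeries (⊤ : Subgroup G) r →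
      ∃ w' ∈ Subgroup.lowerCentralSeries (⊤ : Subgroup G) (r + l.length), rho (z * w) l = rho z l * w' := by
  intro l
  induction l with
  | nil => exact fun z w hw => ⟨w, by simpa using hw, rfl⟩
  | cons c l ih =>
    intro r z w hw
    obtain ⟨w₁, hw₁, h₁⟩ := pcomm_mul_right_err z c hw
    obtain ⟨w', hw', h'⟩ := ih (pcomm z c) hw₁
    refine ⟨w', ?_, ?_⟩
    · rw [show r + (c :: l).length = r + 1 + l.length by simp; omega]
      exact hw'
    · rw [rho_cons', h₁, h', rho_cons']

/-- Main expansion lemma: `ρ(u^c, y₁^{e₁}, …) ≡ ρ(u, y₁, …)^{c·∏eⱼ}` modulo the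
appropriate term of the lower central series. -/
private lemma rho_pow_expand :
    ∀ (l : List (G × ℕ)) {t : ℕ} {u : G}, u ∈ Subgroup.lowerCentralSeries (⊤ : Subgroup G) t → ∀ c : ℕ,
      ∃ w ∈ Subgroup.lowerCentralSeries (⊤ : Subgroup G) (t + l.length + 1),
        rho (u ^ c) (l.map fun p => p.1 ^ p.2) =
          rho u (l.map Prod.fst) ^ (c * (l.map Prod.snd).prod) * w := by
  intro l
  induction l with
  | nil => exact fun hu c => ⟨1, one_mem _, by simp [rho_nil']⟩
  | cons p l ih =>
    intro t u hu c
    obtain ⟨y, e⟩ := p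
    obtain ⟨w₀, hw₀, h₀⟩ := pcomm_pow_pow hu y c e
    obtain ⟨w₁, hw₁, h₁⟩ := rho_mul_err (l.map fun p => p.1 ^ p.2)
      (pcomm u y ^ (c * e)) hw₀
    obtain ⟨w₂, hw₂, h₂⟩ := ih (pcomm_mem_left hu y) (c * e)
    refine ⟨w₂ * w₁, mul_mem ?_ ?_, ?_⟩
    · rw [show t + ((y, e) :: l).length + 1 = t + 1 + l.length + 1 by simp; omega]
      exact hw₂
    · rw [show t + ((y, e) :: l).length + 1 = t + 2 + (l.map fun p => p.1 ^ p.2).length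
        by simp; omega]
      exact hw₁
    · simp only [List.map_cons, rho_cons']
      rw [h₀, h₁, h₂, List.prod_cons, ← mul_assoc (rho (pcomm u y) (l.map Prod.fst) ^ _),
        ← Nat.mul_assoc]

private lemma normal_conj_mem (M : Subgroup G) [M.Normal] {w : G} (hw : w ∈ M) (g : G) :
    g⁻¹ * w * g ∈ M := by
  simpa using Subgroup.Normal.conj_mem (inferInstance : M.Normal) w hw g⁻¹

private lemma prod_err (M : Subgroup G) [M.Normal] (R : G) :
    ∀ l : List (G × ℕ), (∀ p ∈ l, ∃ w ∈ M, p.1 = R ^ p.2 * w) →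
      ∃ w ∈ M, (l.map Prod.fst).prod = R ^ (l.map Prod.snd).sum * w := by
  intro l
  induction l with
  | nil => exact fun _ => ⟨1, one_mem _, by simp⟩
  | cons p l ih =>
    intro h
    obtain ⟨w₀, hw₀, h₀⟩ := h p (List.mem_cons_self)
    obtain ⟨w', hw', h'⟩ := ih fun q hq => h q (List.mem_cons_of_mem p hq)
    refine ⟨((R ^ (l.map Prod.snd).sum)⁻¹ * w₀ * R ^ (l.map Prod.snd).sum) * w',
      mul_mem (normal_conj_mem M hw₀ _) hw', ?_⟩
    simp only [List.map_cons, List.prod_cons, List.sum_cons]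
    rw [h₀, h', pow_add]
    generalize R ^ p.2 = A
    generalize R ^ (l.map Prod.snd).sum = B
    group


/-- `Good S b g`: `g` is a product of at most `b` elements of `S`. -/
private def Good (S : Set G) (b : ℕ) (g : G) : Prop :=
  ∃ l : List G, (∀ x ∈ l, x ∈ S) ∧ l.length ≤ b ∧ l.prod = g

private lemma Good.mono {S : Set G} {b b' : ℕ} {g : G} (h : Good S b g) (hb : b ≤ b') :
    Good S b' g := by
  obtain ⟨l, h1, h2, h3⟩ := h; exact ⟨l, h1, h2.trans hb, h3⟩

private lemma good_mem {S : Set G} {s : G} (hs : s ∈ S) : Good S 1 s :=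
  ⟨[s], by simpa using hs, by simp, by simp⟩

private lemma Good.mul {S : Set G} {b b' : ℕ} {g g' : G} (h : Good S b g)
    (h' : Good S b' g') : Good S (b + b') (g * g') := by
  obtain ⟨l, h1, h2, h3⟩ := h
  obtain ⟨l', h1', h2', h3'⟩ := h'
  refine ⟨l ++ l', ?_, ?_, by rw [List.prod_append, h3, h3']⟩
  · intro x hx; rcases List.mem_append.1 hx with hx | hx
    · exact h1 x hx
    · exact h1' x hx
  · simpa using Nat.add_le_add h2 h2'

private lemma Good.inv {S : Set G} (hS : SymmSet S) {b : ℕ} {g : G} (h : Good S b g) :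
    Good S b g⁻¹ := by
  obtain ⟨l, h1, h2, h3⟩ := h
  have key : ∀ l : List G, ((l.map fun x => x⁻¹).reverse).prod = l.prod⁻¹ := by
    intro l
    induction l with
    | nil => simp
    | cons c l ih => simp [ih, List.prod_append, mul_comm]
  refine ⟨(l.map fun x => x⁻¹).reverse, ?_, by simpa using h2, by rw [key, h3]⟩
  intro x hx
  simp only [List.mem_reverse, List.mem_map] at hx
  obtain ⟨y, hy, rfl⟩ := hx
  exact (hS y).1 (h1 y hy)

private lemma good_one {S : Set G} : Good S 0 1 := ⟨[], by simp, by simp, by simp⟩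

private lemma Good.pow {S : Set G} {b : ℕ} {g : G} (h : Good S b g) :
    ∀ c : ℕ, Good S (c * b) (g ^ c) := by
  intro c
  induction c with
  | zero => simpa using good_one
  | succ c ih =>
    have := ih.mul h
    rw [← pow_succ g c] at this
    simpa [Nat.succ_mul] using this

private lemma Good.pcomm {S : Set G} (hS : SymmSet S) {b b' : ℕ} {g g' : G}
    (h : Good S b g) (h' : Good S b' g') : Good S (2 * b + 2 * b') (pcomm g g') := by
  have h2 := (((h.inv hS).mul (h'.inv hS)).mul h).mul h'
  have e : _root_.pcomm g g' = g⁻¹ * g'⁻¹ * g * g' := rfl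
  rw [e]
  exact h2.mono (by omega)

private lemma good_rho {S : Set G} (hS : SymmSet S) :
    ∀ (l : List G) {a : G} {b q : ℕ}, Good S b a → (∀ c ∈ l, Good S q c) →
      Good S (2 ^ l.length * (b + l.length * q)) (rho a l) := by
  intro l
  induction l with
  | nil => intro a b q h _; simpa [rho_nil'] using h
  | cons c l ih =>
    intro a b q h hl
    have hc : Good S q c := hl c (List.mem_cons_self)
    have h1 : Good S (2 * b + 2 * q) (pcomm a c) := h.pcomm hS hc
    have h2 := ih h1 fun d hd => hl d (List.mem_cons_of_mem c hd)
    rw [rho_cons']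
    refine h2.mono ?_
    have : 2 * b + 2 * q + l.length * q ≤ 2 * (b + (l.length + 1) * q) := by
      have h3 : l.length * q ≤ 2 * (l.length * q) := Nat.le_mul_of_pos_left _ (by norm_num)
      calc 2 * b + 2 * q + l.length * q ≤ 2 * b + 2 * q + 2 * (l.length * q) := by omega
        _ = 2 * (b + (l.length + 1) * q) := by ring
    calc 2 ^ l.length * (2 * b + 2 * q + l.length * q)
        ≤ 2 ^ l.length * (2 * (b + (l.length + 1) * q)) := Nat.mul_le_mul_left _ this
      _ = 2 ^ (c :: l).length * (b + (c :: l).length * q) := by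
          simp [pow_succ]; ring

private lemma good_prod {S : Set G} :
    ∀ (l : List G) {q : ℕ}, (∀ g ∈ l, Good S q g) → Good S (l.length * q) l.prod := by
  intro l
  induction l with
  | nil => intro q _; simpa using good_one
  | cons g l ih =>
    intro q h
    have h1 := (h g (List.mem_cons_self)).mul (ih fun g' hg' => h g' (List.mem_cons_of_mem g hg'))
    rw [← List.prod_cons] at h1
    exact h1.mono (by simp [Nat.succ_mul]; omega)

private lemma mul_sum_list (b : ℕ) (f : ℕ → ℕ) :
    ∀ L : List ℕ, ((L.map fun j => b * f j).sum) = b * (L.map f).sum := by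
  intro L
  induction L with
  | nil => simp
  | cons x L ihL => simp [ihL, Nat.mul_add]

private lemma ofDigits_sum (b : ℕ) :
    ∀ l : List ℕ, (((List.range l.length).map fun j => l.getD j 0 * b ^ j)).sum
      = Nat.ofDigits b l := by
  intro l
  induction l with
  | nil => simp [Nat.ofDigits]
  | cons d l ih =>
    have step : ∀ L : List ℕ,
        ((L.map Nat.succ).map fun j => (d :: l).getD j 0 * b ^ j)
          = L.map fun j => b * (l.getD j 0 * b ^ j) := by
      intro L
      induction L with
      | nil => simp
      | cons x L ihL =>
        simp only [List.map_cons, ihL, List.cons.injEq, and_true]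
        show (d :: l).getD (x + 1) 0 * b ^ (x + 1) = b * (l.getD x 0 * b ^ x)
        rw [List.getD_cons_succ, pow_succ]
        ring
    rw [List.length_cons, List.range_succ_eq_map, List.map_cons, step, Nat.ofDigits_cons,
      List.sum_cons, mul_sum_list b (fun j => l.getD j 0 * b ^ j), ih]
    show (d :: l).getD 0 0 * b ^ 0 + _ = _
    rw [List.getD_cons_zero, pow_zero, Nat.mul_one]



private def plistAux (xl : List G) (k j : ℕ) : List (G × ℕ) :=
  (xl.take j).map (fun y => (y, k)) ++ (xl.drop j).map (fun y => (y, 1))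

private lemma plistAux_length (xl : List G) (k j : ℕ) :
    (plistAux xl k j).length = xl.length := by
  simp [plistAux]
  omega

private lemma plistAux_fst (xl : List G) (k j : ℕ) :
    (plistAux xl k j).map Prod.fst = xl := by
  simp only [plistAux, List.map_append, List.map_map]
  have h1 : (Prod.fst ∘ fun y : G => (y, k)) = id := rfl
  have h2 : (Prod.fst ∘ fun y : G => (y, 1)) = id := rfl
  rw [h1, h2, List.map_id, List.map_id, List.take_append_drop]

private lemma plistAux_snd_prod (xl : List G) (k j : ℕ) (hj : j ≤ xl.length) :
    ((plistAux xl k j).map Prod.snd).prod = k ^ j := by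
  simp only [plistAux, List.map_append, List.map_map, List.prod_append]
  have h1 : (Prod.snd ∘ fun y : G => (y, k)) = fun _ : G => k := rfl
  have h2 : (Prod.snd ∘ fun y : G => (y, 1)) = fun _ : G => (1 : ℕ) := rfl
  rw [h1, h2, List.map_const', List.map_const', List.prod_replicate, List.prod_replicate,
    one_pow, mul_one, List.length_take, min_eq_left (by omega : j ≤ xl.length)]

private lemma plistAux_entries_good {S : Set G} {xl : List G} {k j : ℕ} (hk : 1 ≤ k)
    (hxm : ∀ c ∈ xl, c ∈ S) :
    ∀ c ∈ (plistAux xl k j).map fun p => p.1 ^ p.2, Good S k c := by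
  intro c hc
  simp only [plistAux, List.map_append, List.map_map, List.mem_append, List.mem_map,
    Function.comp] at hc
  rcases hc with ⟨y, hy, rfl⟩ | ⟨y, hy, rfl⟩
  · have h1 : Good S 1 y := good_mem (hxm y (List.take_subset j xl hy))
    simpa using h1.pow k
  · have h1 : Good S 1 y := good_mem (hxm y (List.drop_subset j xl hy))
    have : Good S k y := h1.mono hk
    simpa using this

end MyAuxLemmas

/-- Lemma `lemma_thm1`: for `2 ≤ i ≤ L`, `1 ≤ m ≤ Diam_S(G_ab)`, `s ∈ S` and
`x₂,…,x_i ∈ R`, the word length of `ρ(s^m, x₂, …, x_i)` modulo `G_{i+1}` is at most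
`2^{5i+6}(2^{2i} + L m^{1/i})`. -/
theorem rho_power_quot_word_length_bound (G : Type*) [Group G] [Fintype G] (L : ℕ)
    (hL : NilpotencyClassEq G L) (S R : Set G) (hS : SymmSet S)
    (hgen : Subgroup.closure S = ⊤) (hRS : R ⊆ S)
    (hR : ∀ s ∈ S, (({s, s⁻¹} : Set G) ∩ R).ncard = 1)
    (i : ℕ) (hi2 : 2 ≤ i) (hiL : i ≤ L)
    (m : ℕ) (hm1 : 1 ≤ m)
    (hmD : m ≤ quotDiam S (Set.univ : Set G) (commutator G : Set G))
    (s : G) (hs : s ∈ S) (x : Fin (i - 1) → G) (hx : ∀ j, x j ∈ R) :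
    (quotLength S (Subgroup.lowerCentralSeries (⊤ : Subgroup G) i : Set G) (rho (s ^ m) (List.ofFn x)) : ℝ) ≤
      (2 : ℝ) ^ (5 * i + 6) * ((2 : ℝ) ^ (2 * i) + (L : ℝ) * (m : ℝ) ^ ((1 : ℝ) / i)) := by
  have hi0 : i ≠ 0 := by omega
  set xl : List G := List.ofFn x with hxl
  have hxl_len : xl.length = i - 1 := by simp [hxl]
  have hxmem : ∀ c ∈ xl, c ∈ S := by
    intro c hc
    rw [hxl, List.mem_ofFn] at hc
    obtain ⟨j, rfl⟩ := hc
    exact hRS (hx j)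
  -- the real `i`-th root of `m`
  set tr : ℝ := (m : ℝ) ^ ((1 : ℝ) / i) with htr
  have hm0 : (0 : ℝ) ≤ (m : ℝ) := Nat.cast_nonneg m
  have ht1 : (1 : ℝ) ≤ tr := Real.one_le_rpow (by exact_mod_cast hm1) (by positivity)
  set k : ℕ := Nat.floor tr + 1 with hk
  have hk2 : 2 ≤ k := by
    have h1 : 1 ≤ Nat.floor tr := Nat.le_floor (by simpa using ht1)
    omega
  have hkr : (k : ℝ) ≤ 2 * tr := by
    have h1 : (Nat.floor tr : ℝ) ≤ tr := Nat.floor_le (by linarith)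
    have h2 : (k : ℝ) = (Nat.floor tr : ℝ) + 1 := by rw [hk]; push_cast; ring
    linarith
  have htpow : tr ^ i = (m : ℝ) := by
    rw [htr, ← Real.rpow_natCast ((m : ℝ) ^ ((1 : ℝ) / i)) i, ← Real.rpow_mul hm0,
      one_div, inv_mul_cancel₀ (by exact_mod_cast hi0 : (i : ℝ) ≠ 0), Real.rpow_one]
  have hmk : m < k ^ i := by
    have h2 : tr < (k : ℝ) := by
      have h3 := Nat.lt_floor_add_one tr
      rw [hk]; push_cast; linarith
    have h3 : (m : ℝ) < (k : ℝ) ^ i := by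
      rw [← htpow]
      exact pow_lt_pow_left₀ h2 (by linarith) hi0
    exact_mod_cast h3
  have hk1 : 1 < k := hk2
  -- base-`k` digits of `m`
  set D : List ℕ := Nat.digits k m with hD
  have hDlen : D.length ≤ i := by
    have hlen := Nat.digits_len k m hk1 (by omega : m ≠ 0)
    have hlog := Nat.log_lt_of_lt_pow (by omega : m ≠ 0) hmk
    rw [hD, hlen]
    omega
  have hdig : ∀ j, D.getD j 0 < k := by
    intro j
    by_cases hj : j < D.length
    · have hmem : D.getD j 0 ∈ D := by
        rw [D.getD_eq_getElem 0 hj]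
        exact List.getElem_mem hj
      exact Nat.digits_lt_base hk1 hmem
    · rw [List.getD_eq_default _ _ (by omega)]
      omega
  set Rr : G := rho s xl with hRr
  have hs0 : s ∈ Subgroup.lowerCentralSeries (⊤ : Subgroup G) 0 := by rw [Subgroup.lowerCentralSeries_zero]; trivial
  -- main congruence for `ρ(s^m, x₂, …, x_i)`
  have hG : ∃ w ∈ Subgroup.lowerCentralSeries (⊤ : Subgroup G) i, rho (s ^ m) xl = Rr ^ m * w := by
    obtain ⟨w, hw, hwe⟩ := rho_pow_expand (xl.map fun y => ((y : G), (1 : ℕ))) hs0 m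
    have e1 : (xl.map fun y => ((y : G), (1 : ℕ))).map (fun p => p.1 ^ p.2) = xl := by
      rw [List.map_map]
      have e : ((fun p : G × ℕ => p.1 ^ p.2) ∘ fun y : G => (y, (1 : ℕ)))
          = fun y : G => y ^ 1 := rfl
      rw [e]
      simp
    have e2 : (xl.map fun y => ((y : G), (1 : ℕ))).map Prod.fst = xl := by
      rw [List.map_map]
      have e : (Prod.fst ∘ fun y : G => (y, (1 : ℕ))) = id := rfl
      rw [e, List.map_id]
    have e3 : ((xl.map fun y => ((y : G), (1 : ℕ))).map Prod.snd).prod = 1 := by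
      rw [List.map_map]
      have : (Prod.snd ∘ fun y : G => (y, (1 : ℕ))) = fun _ : G => (1 : ℕ) := rfl
      rw [this, List.map_const', List.prod_replicate, one_pow]
    rw [e1, e2, e3, Nat.mul_one] at hwe
    refine ⟨w, ?_, hwe⟩
    rw [show 0 + (xl.map fun y => ((y : G), (1 : ℕ))).length + 1 = i by
      simp [hxl_len]; omega] at hw
    exact hw
  -- per-digit congruences
  have hA : ∀ j < D.length, ∃ w ∈ Subgroup.lowerCentralSeries (⊤ : Subgroup G) i,
      rho (s ^ D.getD j 0) ((plistAux xl k j).map fun p => p.1 ^ p.2)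
        = Rr ^ (D.getD j 0 * k ^ j) * w := by
    intro j hj
    have hjn : j ≤ i - 1 := by omega
    obtain ⟨w, hw, hwe⟩ := rho_pow_expand (plistAux xl k j) hs0 (D.getD j 0)
    rw [plistAux_fst, plistAux_snd_prod xl k j (by omega)] at hwe
    refine ⟨w, ?_, hwe⟩
    rw [show 0 + (plistAux xl k j).length + 1 = i by
      rw [plistAux_length, hxl_len]; omega] at hw
    exact hw
  -- assemble along the digits
  set BL : List (G × ℕ) := (List.range D.length).map
      (fun j => (rho (s ^ D.getD j 0) ((plistAux xl k j).map fun p => p.1 ^ p.2),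
        D.getD j 0 * k ^ j)) with hBL
  have hmemBL : ∀ p ∈ BL, ∃ w ∈ Subgroup.lowerCentralSeries (⊤ : Subgroup G) i, p.1 = Rr ^ p.2 * w := by
    intro p hp
    rw [hBL] at hp
    simp only [List.mem_map, List.mem_range] at hp
    obtain ⟨j, hj, rfl⟩ := hp
    exact hA j hj
  obtain ⟨wB, hwB, hBe⟩ := prod_err (Subgroup.lowerCentralSeries (⊤ : Subgroup G) i) Rr BL hmemBL
  have hsum : (BL.map Prod.snd).sum = m := by
    rw [hBL, List.map_map]
    have e : (Prod.snd ∘ fun j =>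
        (rho (s ^ D.getD j 0) ((plistAux xl k j).map fun p => p.1 ^ p.2),
          D.getD j 0 * k ^ j)) = fun j => D.getD j 0 * k ^ j := rfl
    rw [e, ofDigits_sum k D, hD, Nat.ofDigits_digits]
  -- word-length bound for the assembled product
  have hGoodTerms : ∀ g ∈ BL.map Prod.fst, Good S (2 ^ (i - 1) * (k + (i - 1) * k)) g := by
    intro g hg
    rw [hBL, List.map_map] at hg
    simp only [List.mem_map, List.mem_range, Function.comp] at hg
    obtain ⟨j, hj, rfl⟩ := hg
    have hgs : Good S k (s ^ D.getD j 0) := by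
      have h1 : Good S (D.getD j 0 * 1) (s ^ D.getD j 0) := (good_mem hs).pow _
      exact (h1.mono (by omega)).mono (le_of_lt (hdig j))
    have hentries := plistAux_entries_good (S := S) (xl := xl) (k := k) (j := j)
      (by omega) hxmem
    have h2 := good_rho hS _ hgs hentries
    rw [List.length_map, plistAux_length, hxl_len] at h2
    exact h2
  have hGoodB : Good S (D.length * (2 ^ (i - 1) * (k + (i - 1) * k))) (BL.map Prod.fst).prod := by
    have h1 := good_prod (BL.map Prod.fst) hGoodTerms
    rw [List.length_map, hBL, List.length_map, List.length_range] at h1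
    exact h1
  -- the quotient word-length bound
  have hfinal : quotLength S (Subgroup.lowerCentralSeries (⊤ : Subgroup G) i : Set G) (rho (s ^ m) xl)
      ≤ D.length * (2 ^ (i - 1) * (k + (i - 1) * k)) := by
    obtain ⟨wg, hwg, hge⟩ := hG
    obtain ⟨l, hl1, hl2, hl3⟩ := hGoodB
    have hprod : rho (s ^ m) xl = l.prod * (wB⁻¹ * wg) := by
      rw [hge, hl3, hBe, hsum]
      group
    have hmem : quotLength S (Subgroup.lowerCentralSeries (⊤ : Subgroup G) i : Set G) (rho (s ^ m) xl)
        ≤ l.length :=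
      Nat.sInf_le ⟨l, hl1, rfl, wB⁻¹ * wg,
        SetLike.mem_coe.2 (mul_mem (inv_mem hwB) hwg), hprod⟩
    exact hmem.trans hl2
  -- numeric estimates
  have hBnd2 : D.length * (2 ^ (i - 1) * (k + (i - 1) * k)) ≤ i * (2 ^ (i - 1) * (i * k)) := by
    have h1 : k + (i - 1) * k = i * k := by
      have h2 : k + (i - 1) * k = ((i - 1) + 1) * k := by ring
      rw [h2, show i - 1 + 1 = i by omega]
    rw [h1]
    exact Nat.mul_le_mul_right _ hDlen
  have hcast : (quotLength S (Subgroup.lowerCentralSeries (⊤ : Subgroup G) i : Set G) (rho (s ^ m) xl) : ℝ)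
      ≤ (i : ℝ) * ((2 : ℝ) ^ (i - 1) * ((i : ℝ) * (k : ℝ))) := by
    have h1 : (quotLength S (Subgroup.lowerCentralSeries (⊤ : Subgroup G) i : Set G) (rho (s ^ m) xl) : ℝ)
        ≤ ((i * (2 ^ (i - 1) * (i * k)) : ℕ) : ℝ) :=
      Nat.cast_le.2 (hfinal.trans hBnd2)
    calc (quotLength S (Subgroup.lowerCentralSeries (⊤ : Subgroup G) i : Set G) (rho (s ^ m) xl) : ℝ)
        ≤ ((i * (2 ^ (i - 1) * (i * k)) : ℕ) : ℝ) := h1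
      _ = (i : ℝ) * ((2 : ℝ) ^ (i - 1) * ((i : ℝ) * (k : ℝ))) := by push_cast; ring
  have hi2pow : (i : ℝ) ≤ 2 ^ i := by exact_mod_cast (Nat.lt_two_pow_self (n := i)).le
  have h2n : (2 : ℝ) ^ (i - 1) ≤ 2 ^ i := by
    apply pow_le_pow_right₀ one_le_two (by omega)
  have htpos : (0 : ℝ) < tr := lt_of_lt_of_le one_pos ht1
  have hL1 : (1 : ℝ) ≤ (L : ℝ) := by exact_mod_cast (by omega : 1 ≤ L)
  have key : (i : ℝ) * ((2 : ℝ) ^ (i - 1) * ((i : ℝ) * (k : ℝ)))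
      ≤ 2 ^ i * (2 ^ i * (2 ^ i * (2 * tr))) := by
    have hknn : (0 : ℝ) ≤ (k : ℝ) := Nat.cast_nonneg k
    have hin : (0 : ℝ) ≤ (i : ℝ) := Nat.cast_nonneg i
    gcongr <;> first
      | exact hi2pow
      | exact h2n
      | exact hkr
      | positivity
  have key2 : (2 : ℝ) ^ i * (2 ^ i * (2 ^ i * (2 * tr))) ≤ 2 ^ (5 * i + 6) * ((L : ℝ) * tr) := by
    have e1 : (2 : ℝ) ^ i * (2 ^ i * (2 ^ i * (2 * tr))) = 2 ^ (i + i + i + 1) * tr := by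
      rw [pow_add, pow_add, pow_add, pow_one]
      ring
    rw [e1]
    have h3 : (2 : ℝ) ^ (i + i + i + 1) ≤ 2 ^ (5 * i + 6) :=
      pow_le_pow_right₀ one_le_two (by omega)
    have h4 : tr ≤ (L : ℝ) * tr := le_mul_of_one_le_left htpos.le hL1
    calc (2 : ℝ) ^ (i + i + i + 1) * tr ≤ 2 ^ (5 * i + 6) * tr := by
          exact mul_le_mul_of_nonneg_right h3 htpos.le
      _ ≤ 2 ^ (5 * i + 6) * ((L : ℝ) * tr) :=
          mul_le_mul_of_nonneg_left h4 (by positivity)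
  have key3 : (2 : ℝ) ^ (5 * i + 6) * ((L : ℝ) * tr)
      ≤ (2 : ℝ) ^ (5 * i + 6) * ((2 : ℝ) ^ (2 * i) + (L : ℝ) * tr) := by
    have h5 : (0 : ℝ) ≤ (2 : ℝ) ^ (2 * i) := by positivity
    have h6 : (L : ℝ) * tr ≤ (2 : ℝ) ^ (2 * i) + (L : ℝ) * tr := by linarith
    exact mul_le_mul_of_nonneg_left h6 (by positivity)
  calc (quotLength S (Subgroup.lowerCentralSeries (⊤ : Subgroup G) i : Set G) (rho (s ^ m) xl) : ℝ)
      ≤ (i : ℝ) * ((2 : ℝ) ^ (i - 1) * ((i : ℝ) * (k : ℝ))) := hcast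
    _ ≤ 2 ^ i * (2 ^ i * (2 ^ i * (2 * tr))) := key
    _ ≤ 2 ^ (5 * i + 6) * ((L : ℝ) * tr) := key2
    _ ≤ (2 : ℝ) ^ (5 * i + 6) * ((2 : ℝ) ^ (2 * i) + (L : ℝ) * tr) := key3

end
end

section
/- Let G be a finite nilpotent group of nilpotency class L and rank r. Then for every i with 1 ≤ i ≤ L, |G_i/G_{i+1}| ≤ |G_ab|^{r^{i−1}}. -/
open scoped BigOperators
open scoped Classical
open scoped commutatorElement IsMulCommutative

noncomputable section

private lemma comm_mul_left' {G : Type*} [Group G] (a b g : G) :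
    ⁅a * b, g⁆ = a * ⁅b, g⁆ * a⁻¹ * ⁅a, g⁆ := by
  simp only [commutatorElement_def]; group

private lemma comm_mul_right' {G : Type*} [Group G] (a g h : G) :
    ⁅a, g * h⁆ = ⁅a, g⁆ * (g * ⁅a, h⁆ * g⁻¹) := by
  simp only [commutatorElement_def]; group

private lemma comm_inv_right' {G : Type*} [Group G] (a g : G) :
    ⁅a, g⁻¹⁆ = g⁻¹ * ⁅a, g⁆⁻¹ * g := by
  simp only [commutatorElement_def]; group

private lemma step_lemma {G : Type*} [Group G] [Fintype G] (T : Finset G)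
    (hT : Subgroup.closure ((T : Set G) ∪ (T : Set G)⁻¹) = ⊤)
    (A B C : Subgroup G) [B.Normal] [C.Normal]
    (hB : ⁅A, (⊤ : Subgroup G)⁆ = B) (hC : ⁅B, (⊤ : Subgroup G)⁆ = C) :
    C.relIndex B ≤ (B.relIndex A) ^ T.card := by
  classical
  let π : G →* G ⧸ C := QuotientGroup.mk' C
  -- π kills C
  have hπ1 : ∀ x ∈ C, π x = 1 := fun x hx => (QuotientGroup.eq_one_iff x).mpr hx
  -- conjugation is trivial on π '' B
  have hπ : ∀ x ∈ B, ∀ g : G, π (g * x * g⁻¹) = π x := by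
    intro x hx g
    have h1 : ⁅g, x⁆ ∈ C := by
      rw [← hC, Subgroup.commutator_comm]
      exact Subgroup.commutator_mem_commutator (Subgroup.mem_top g) hx
    have h2 : g * x * g⁻¹ = ⁅g, x⁆ * x := by simp only [commutatorElement_def]; group
    rw [h2, map_mul, hπ1 _ h1, one_mul]
  -- elements of π '' B commute
  have hcomm : ∀ x ∈ B, ∀ y ∈ B, π x * π y = π y * π x := by
    intro x hx y hy
    have h1 : ⁅x, y⁆ ∈ C := by
      rw [← hC]; exact Subgroup.commutator_mem_commutator hx (Subgroup.mem_top y)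
    have h2 : x * y = ⁅x, y⁆ * (y * x) := by simp only [commutatorElement_def]; group
    rw [← map_mul, h2, map_mul, hπ1 _ h1, one_mul, map_mul]
  have hcommB : ∀ (a : G) (g : G), a ∈ A → ⁅a, g⁆ ∈ B := by
    intro a g ha
    rw [← hB]; exact Subgroup.commutator_mem_commutator ha (Subgroup.mem_top g)
  let M : Subgroup (G ⧸ C) := B.map π
  haveI hMcomm : IsMulCommutative ↥M := by
    constructor; constructor
    rintro ⟨_, x, hx, rfl⟩ ⟨_, y, hy, rfl⟩
    exact Subtype.ext (hcomm x hx y hy)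
  -- the basic homomorphisms
  have hkerψ : ∀ (g : G) (a : ↥A), (a : G) ∈ B → π ⁅(a : G), g⁆ = 1 := by
    intro g a ha
    refine hπ1 _ ?_
    rw [← hC]; exact Subgroup.commutator_mem_commutator ha (Subgroup.mem_top g)
  let ψ : G → (↥A →* ↥M) := fun g => MonoidHom.mk'
    (fun a => ⟨π ⁅(a : G), g⁆, Subgroup.mem_map_of_mem π (hcommB a g a.2)⟩)
    (by
      intro a b
      refine Subtype.ext ?_
      show π ⁅(a : G) * b, g⁆ = π ⁅(a : G), g⁆ * π ⁅(b : G), g⁆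
      rw [comm_mul_left', show ((a:G) * ⁅(b:G), g⁆ * (a:G)⁻¹ * ⁅(a:G), g⁆)
          = ((a:G) * ⁅(b:G), g⁆ * (a:G)⁻¹) * ⁅(a:G), g⁆ by group, map_mul,
        hπ _ (hcommB b g b.2) a]
      exact hcomm _ (hcommB b g b.2) _ (hcommB a g a.2))
  let Q1 := ↥A ⧸ B.subgroupOf A
  let ψbar : G → (Q1 →* ↥M) := fun g => QuotientGroup.lift (B.subgroupOf A) (ψ g)
    (fun a ha => Subtype.ext (hkerψ g a ha))
  let Ψ : (↥T → Q1) →* ↥M :=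
    ∏ g : ↥T, (ψbar (g : G)).comp (Pi.evalMonoidHom (fun _ => Q1) g)
  have hΨ : ∀ f : ↥T → Q1, Ψ f = ∏ g : ↥T, ψbar (g : G) (f g) :=
    fun f => MonoidHom.finset_prod_apply _ _ f
  let S : Subgroup (G ⧸ C) := Ψ.range.map M.subtype
  -- single generators land in S
  have hsingle : ∀ g ∈ T, ∀ a ∈ A, π ⁅a, g⁆ ∈ S := by
    intro g hg a ha
    set q : Q1 := QuotientGroup.mk (⟨a, ha⟩ : ↥A)
    set f : ↥T → Q1 := Pi.mulSingle (⟨g, hg⟩ : ↥T) q with hf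
    have h1 : Ψ f = ψbar g q := by
      rw [hΨ, hf]
      rw [Fintype.prod_eq_single (⟨g, hg⟩ : ↥T)
        (fun x hx => by rw [Pi.mulSingle_eq_of_ne hx, map_one])]
      rw [Pi.mulSingle_eq_same]
    have h2 : (ψbar g q : G ⧸ C) = π ⁅a, g⁆ := rfl
    exact ⟨Ψ f, ⟨f, rfl⟩, by rw [h1]; exact h2⟩
  -- the set of g working for all a is a subgroup
  let K : Subgroup G :=
  { carrier := {g : G | ∀ a ∈ A, π ⁅a, g⁆ ∈ S}
    one_mem' := by intro a _; simp only [commutatorElement_one_right, map_one]; exact S.one_mem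
    mul_mem' := by
      intro g h hg hh a ha
      rw [comm_mul_right', map_mul, hπ _ (hcommB a h ha) g]
      exact S.mul_mem (hg a ha) (hh a ha)
    inv_mem' := by
      intro g hg a ha
      have h1 := hπ ⁅a, g⁆⁻¹ (B.inv_mem (hcommB a g ha)) g⁻¹
      rw [comm_inv_right', show g⁻¹ * ⁅a, g⁆⁻¹ * g = g⁻¹ * ⁅a, g⁆⁻¹ * (g⁻¹)⁻¹ by group, h1,
        map_inv]
      exact S.inv_mem (hg a ha) }
  have hK : ∀ g : G, g ∈ K := by
    have h1 : Subgroup.closure ((T : Set G) ∪ (T : Set G)⁻¹) ≤ K := by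
      rw [Subgroup.closure_le]
      refine Set.union_subset ?_ ?_
      · intro g hg
        exact fun a ha => hsingle g hg a ha
      · intro g hg
        have : g⁻¹ ∈ K := fun a ha => hsingle g⁻¹ (Set.mem_inv.mp hg) a ha
        simpa using K.inv_mem this
    intro g
    exact h1 (hT ▸ Subgroup.mem_top g)
  -- M ≤ S
  have hMS : M ≤ S := by
    have hMeq : M = ⁅A.map π, (⊤ : Subgroup (G ⧸ C))⁆ := by
      rw [show M = B.map π from rfl, ← hB, Subgroup.map_commutator,
        Subgroup.map_top_of_surjective π (QuotientGroup.mk'_surjective C)]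
    rw [hMeq, Subgroup.commutator_le]
    rintro x ⟨a, ha, rfl⟩ y -
    obtain ⟨g, rfl⟩ := QuotientGroup.mk'_surjective C y
    rw [← map_commutatorElement]
    exact hK g a ha
  have hsurj : Function.Surjective Ψ := by
    intro m
    obtain ⟨x, hx, hxm⟩ := hMS m.2
    obtain ⟨f, rfl⟩ := hx
    exact ⟨f, Subtype.ext hxm⟩
  -- counting
  have hMcard : Nat.card ↥M = C.relIndex B := by
    have e1 : (π.comp B.subtype).range = M := by
      rw [MonoidHom.range_comp, Subgroup.range_subtype]
    have e2 : (π.comp B.subtype).ker = C.subgroupOf B := by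
      ext x
      simp [MonoidHom.mem_ker, Subgroup.mem_subgroupOf, QuotientGroup.eq_one_iff, π]
    have := Nat.card_congr (QuotientGroup.quotientKerEquivRange (π.comp B.subtype)).toEquiv
    rw [e1, e2] at this
    exact this.symm
  have hQ1card : Nat.card Q1 = B.relIndex A := rfl
  calc C.relIndex B = Nat.card ↥M := hMcard.symm
    _ ≤ Nat.card (↥T → Q1) := Nat.card_le_card_of_surjective Ψ hsurj
    _ = Nat.card Q1 ^ T.card := by
        rw [Nat.card_fun]
        congr 1
        rw [Nat.card_eq_fintype_card, Fintype.card_coe]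
    _ = (B.relIndex A) ^ T.card := by rw [hQ1card]

/-- Corollary `ab_size`, first part: `|G_i/G_{i+1}| ≤ |G_ab|^{r^{i-1}}`,
where `|G_i/G_{i+1}|` is the relative index of `G_{i+1}` in `G_i` and `|G_ab|` is the index of
the commutator subgroup. -/
theorem quotient_card_le_ab_pow (G : Type*) [Group G] [Fintype G] (L r : ℕ)
    (hL : NilpotencyClassEq G L) (hr : HasRank G r)
    (i : ℕ) (hi1 : 1 ≤ i) (hiL : i ≤ L) :
    (Subgroup.lowerCentralSeries (⊤ : Subgroup G) i).relIndex (Subgroup.lowerCentralSeries (⊤ : Subgroup G) (i - 1)) ≤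
      (commutator G).index ^ (r ^ (i - 1)) := by
  obtain ⟨⟨T, hTcard, hTgen⟩, -⟩ := hr
  have key : ∀ k : ℕ, (Subgroup.lowerCentralSeries (⊤ : Subgroup G) (k + 1)).relIndex (Subgroup.lowerCentralSeries (⊤ : Subgroup G) k) ≤
      (commutator G).index ^ (r ^ k) := by
    intro k
    induction k with
    | zero =>
      simp [commutator_def, Subgroup.lowerCentralSeries_zero, Subgroup.relIndex_top_right]
    | succ k ih =>
      have h := step_lemma T hTgen (Subgroup.lowerCentralSeries (⊤ : Subgroup G) k) (Subgroup.lowerCentralSeries (⊤ : Subgroup G) (k + 1))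
        (Subgroup.lowerCentralSeries (⊤ : Subgroup G) (k + 2)) rfl rfl
      calc (Subgroup.lowerCentralSeries (⊤ : Subgroup G) (k + 2)).relIndex (Subgroup.lowerCentralSeries (⊤ : Subgroup G) (k + 1))
          ≤ ((Subgroup.lowerCentralSeries (⊤ : Subgroup G) (k + 1)).relIndex (Subgroup.lowerCentralSeries (⊤ : Subgroup G) k)) ^ T.card := h
        _ ≤ ((commutator G).index ^ (r ^ k)) ^ r := by
            rw [hTcard]; exact Nat.pow_le_pow_left ih r
        _ = (commutator G).index ^ (r ^ (k + 1)) := by rw [← pow_mul, pow_succ]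
  obtain ⟨k, rfl⟩ : ∃ k, i = k + 1 := ⟨i - 1, (Nat.succ_pred_eq_of_pos hi1).symm⟩
  simpa using key k

end
end

section
/- Let n ≥ 1 and α ≥ 1 be integers and p a prime. Then (1/p^{α(n+2)}) · ∑_{u ∈ (ℤ/p^αℤ)^{n+2}} ( p^α / |⟨u₁, …, u_{n+2}⟩| )^n ≤ exp( 1/(p² − 1) ), where ⟨u₁, …, u_{n+2}⟩ denotes the additive subgroup of ℤ/p^αℤ generated by the coordinates u₁, …, u_{n+2} of u, and the left-hand side is the expectation of ( |ℤ/p^αℤ| / |⟨U₁,…,U_{n+2}⟩| )^n for U₁, …, U_{n+2} independent and uniform on ℤ/p^αℤ. -/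
open scoped BigOperators
open scoped Classical

noncomputable section

section AuxIidGen
open Finset

namespace IidGenAux

lemma count_dvd {p α j : ℕ} (hp : p.Prime) (hj : j ≤ α) :
    haveI : NeZero (p ^ α) := ⟨pow_ne_zero _ hp.ne_zero⟩
    (univ.filter fun x : ZMod (p ^ α) => p ^ j ∣ x.val).card = p ^ (α - j) := by
  haveI : NeZero (p ^ α) := ⟨pow_ne_zero _ hp.ne_zero⟩
  have hpj : (0:ℕ) < p ^ j := pow_pos hp.pos j
  have hmul : p ^ (α - j) * p ^ j = p ^ α := by
    rw [← pow_add, Nat.sub_add_cancel hj]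
  rw [← Finset.card_range (p ^ (α - j))]
  refine Finset.card_nbij' (fun x => x.val / p ^ j)
    (fun k => ((k * p ^ j : ℕ) : ZMod (p ^ α))) ?_ ?_ ?_ ?_
  · intro x hx
    simp only [Finset.mem_coe] at hx ⊢
    rw [Finset.mem_filter] at hx
    rw [Finset.mem_range]
    have hlt : x.val < p ^ α := ZMod.val_lt x
    have := Nat.div_lt_div_of_lt_of_dvd (pow_dvd_pow p hj) hlt
    rwa [Nat.pow_div hj hp.pos] at this
  · intro k hk
    simp only [Finset.mem_coe] at hk ⊢
    rw [Finset.mem_range] at hk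
    have hlt : k * p ^ j < p ^ α := by
      calc k * p ^ j < p ^ (α - j) * p ^ j := by
            exact (Nat.mul_lt_mul_right hpj).2 hk
        _ = p ^ α := hmul
    rw [Finset.mem_filter]
    refine ⟨Finset.mem_univ _, ?_⟩
    rw [ZMod.val_natCast_of_lt hlt]
    exact dvd_mul_left _ _
  · intro x hx
    simp only [Finset.mem_coe] at hx ⊢
    rw [Finset.mem_filter] at hx
    show ((x.val / p ^ j * p ^ j : ℕ) : ZMod (p ^ α)) = x
    rw [Nat.div_mul_cancel hx.2]
    exact ZMod.natCast_rightInverse x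
  · intro k hk
    simp only [Finset.mem_coe] at hk ⊢
    rw [Finset.mem_range] at hk
    have hlt : k * p ^ j < p ^ α := by
      calc k * p ^ j < p ^ (α - j) * p ^ j := (Nat.mul_lt_mul_right hpj).2 hk
        _ = p ^ α := hmul
    show ((k * p ^ j : ℕ) : ZMod (p ^ α)).val / p ^ j = k
    rw [ZMod.val_natCast_of_lt hlt, Nat.mul_div_cancel k hpj]

lemma card_closure_ge {p α m : ℕ} (hp : p.Prime) (hα : 1 ≤ α)
    (u : Fin m → ZMod (p ^ α)) {j : ℕ} (hjα : j < α) (i : Fin m)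
    (hx : ¬ p ^ (j + 1) ∣ (haveI : NeZero (p ^ α) := ⟨pow_ne_zero _ hp.ne_zero⟩; (u i).val)) :
    p ^ (α - j) ≤ Nat.card (AddSubgroup.closure (Set.range u)) := by
  haveI : NeZero (p ^ α) := ⟨pow_ne_zero _ hp.ne_zero⟩
  have h1 : AddSubgroup.zmultiples (u i) ≤ AddSubgroup.closure (Set.range u) :=
    AddSubgroup.zmultiples_le_of_mem (AddSubgroup.subset_closure (Set.mem_range_self i))
  have h2 : Nat.card (AddSubgroup.zmultiples (u i)) ≤
      Nat.card (AddSubgroup.closure (Set.range u)) := AddSubgroup.card_le_of_le h1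
  refine le_trans ?_ h2
  rw [Nat.card_zmultiples]
  -- addOrderOf (u i) = p ^ α / gcd (p ^ α) (u i).val
  have hord : addOrderOf (u i) = p ^ α / (p ^ α).gcd (u i).val := by
    conv_lhs => rw [← ZMod.natCast_rightInverse (u i)]
    exact ZMod.addOrderOf_coe _ (pow_ne_zero _ hp.ne_zero)
  rw [hord]
  have hgcddvd : (p ^ α).gcd (u i).val ∣ p ^ α := Nat.gcd_dvd_left _ _
  obtain ⟨k, hk, hkeq⟩ := (Nat.dvd_prime_pow hp).1 hgcddvd
  have hkj : k ≤ j := by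
    by_contra hc
    push_neg at hc
    exact hx (dvd_trans (pow_dvd_pow p hc) (hkeq ▸ Nat.gcd_dvd_right _ _))
  have hle : (p ^ α).gcd (u i).val ≤ p ^ j := hkeq ▸ Nat.pow_le_pow_right hp.pos hkj
  calc p ^ (α - j) = p ^ α / p ^ j := (Nat.pow_div hjα.le hp.pos).symm
    _ ≤ p ^ α / (p ^ α).gcd (u i).val :=
        Nat.div_le_div_left hle (Nat.pos_of_ne_zero (by
          intro h0
          rw [h0] at hkeq
          exact (pow_ne_zero k hp.ne_zero) hkeq.symm))

end IidGenAux

end AuxIidGen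

/-- Lemma `iid_generation`: for `U₁,…,U_{n+2}` i.i.d. uniform on `ℤ/p^αℤ`,
`𝔼[(|ℤ/p^αℤ|/|⟨U₁,…,U_{n+2}⟩|)^n] ≤ exp(1/(p²-1))`. -/
theorem iid_generation_expectation (n α : ℕ) (hn : 1 ≤ n) (hα : 1 ≤ α)
    (p : ℕ) (hp : p.Prime) :
    haveI : NeZero (p ^ α) := ⟨pow_ne_zero _ hp.ne_zero⟩
    (1 / (p : ℝ) ^ (α * (n + 2))) *
        ∑ u : Fin (n + 2) → ZMod (p ^ α),
          ((p : ℝ) ^ α / (Nat.card (↥(AddSubgroup.closure (Set.range u))) : ℝ)) ^ n ≤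
      Real.exp (1 / ((p : ℝ) ^ 2 - 1)) := by
  haveI : NeZero (p ^ α) := ⟨pow_ne_zero _ hp.ne_zero⟩
  have hp1 : (1:ℝ) < (p:ℝ) := by exact_mod_cast hp.one_lt
  have hp0 : (0:ℝ) < (p:ℝ) := lt_trans one_pos hp1
  -- pointwise bound
  have key : ∀ u : Fin (n + 2) → ZMod (p ^ α),
      ((p : ℝ) ^ α / (Nat.card (↥(AddSubgroup.closure (Set.range u))) : ℝ)) ^ n ≤
      ∑ j ∈ Finset.range (α + 1),
        (p : ℝ) ^ (j * n) * ∏ i, (if p ^ j ∣ (u i).val then (1:ℝ) else 0) := by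
    intro u
    have hP0 : ∀ i, p ^ 0 ∣ (u i).val := fun i => by simp
    set J := Nat.findGreatest (fun j => ∀ i, p ^ j ∣ (u i).val) α with hJdef
    have hJle : J ≤ α := Nat.findGreatest_le α
    have hPJ : ∀ i, p ^ J ∣ (u i).val := by
      rw [hJdef]
      exact Nat.findGreatest_spec (P := fun j => ∀ i, p ^ j ∣ (u i).val) (Nat.zero_le α) hP0
    have hcardpos : 0 < (Nat.card (↥(AddSubgroup.closure (Set.range u))) : ℝ) := by
      have : 0 < Nat.card (↥(AddSubgroup.closure (Set.range u))) := Nat.card_pos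
      exact_mod_cast this
    have hcard : (p:ℝ) ^ (α - J) ≤ (Nat.card (↥(AddSubgroup.closure (Set.range u))) : ℝ) := by
      rcases eq_or_lt_of_le hJle with h | h
      · rw [h, Nat.sub_self, pow_zero]
        exact_mod_cast Nat.card_pos
      · have hnot : ¬ ∀ i, p ^ (J + 1) ∣ (u i).val :=
          Nat.findGreatest_is_greatest (Nat.lt_succ_self J) (Nat.succ_le_of_lt h)
        push_neg at hnot
        obtain ⟨i, hi⟩ := hnot
        have := IidGenAux.card_closure_ge hp hα u h i hi
        calc (p:ℝ) ^ (α - J) = ((p ^ (α - J) : ℕ) : ℝ) := by push_cast; ring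
          _ ≤ _ := by exact_mod_cast this
    have hdiv : (p : ℝ) ^ α / (Nat.card (↥(AddSubgroup.closure (Set.range u))) : ℝ) ≤
        (p:ℝ) ^ J := by
      rw [div_le_iff₀ hcardpos]
      calc (p:ℝ) ^ α = (p:ℝ) ^ J * (p:ℝ) ^ (α - J) := by
            rw [← pow_add, ← Nat.add_sub_assoc hJle, Nat.add_sub_cancel_left]
        _ ≤ _ := by
            exact mul_le_mul_of_nonneg_left hcard (pow_nonneg hp0.le J)
    have hXle : ((p : ℝ) ^ α / (Nat.card (↥(AddSubgroup.closure (Set.range u))) : ℝ)) ^ n ≤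
        (p:ℝ) ^ (J * n) := by
      rw [pow_mul]
      exact pow_le_pow_left₀ (div_nonneg (pow_nonneg hp0.le α) hcardpos.le) hdiv n
    refine hXle.trans ?_
    have hJmem : J ∈ Finset.range (α + 1) := Finset.mem_range.2 (Nat.lt_succ_of_le hJle)
    have hterm : (p:ℝ) ^ (J * n) =
        (p : ℝ) ^ (J * n) * ∏ i, (if p ^ J ∣ (u i).val then (1:ℝ) else 0) := by
      rw [Finset.prod_eq_one (fun i _ => if_pos (hPJ i)), mul_one]
    rw [hterm]
    refine Finset.single_le_sum (f := fun j =>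
      (p : ℝ) ^ (j * n) * ∏ i, (if p ^ j ∣ (u i).val then (1:ℝ) else 0)) ?_ hJmem
    intro j _
    refine mul_nonneg (pow_nonneg hp0.le _) (Finset.prod_nonneg fun i _ => ?_)
    split <;> norm_num
  -- sum the bound
  have hsum : ∑ u : Fin (n + 2) → ZMod (p ^ α),
      ((p : ℝ) ^ α / (Nat.card (↥(AddSubgroup.closure (Set.range u))) : ℝ)) ^ n ≤
      ∑ j ∈ Finset.range (α + 1), (p : ℝ) ^ (j * n) * ((p:ℝ) ^ (α - j)) ^ (n + 2) := by
    calc _ ≤ ∑ u : Fin (n + 2) → ZMod (p ^ α), ∑ j ∈ Finset.range (α + 1),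
          (p : ℝ) ^ (j * n) * ∏ i, (if p ^ j ∣ (u i).val then (1:ℝ) else 0) :=
        Finset.sum_le_sum fun u _ => key u
      _ = ∑ j ∈ Finset.range (α + 1), (p : ℝ) ^ (j * n) *
          ∑ u : Fin (n + 2) → ZMod (p ^ α), ∏ i, (if p ^ j ∣ (u i).val then (1:ℝ) else 0) := by
        rw [Finset.sum_comm]
        exact Finset.sum_congr rfl fun j _ => by rw [Finset.mul_sum]
      _ = _ := by
        refine Finset.sum_congr rfl fun j hj => ?_
        rw [Finset.mem_range, Nat.lt_succ_iff] at hj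
        congr 1
        have hpi : ∑ u : Fin (n + 2) → ZMod (p ^ α),
            ∏ i, (if p ^ j ∣ (u i).val then (1:ℝ) else 0) =
            ∏ _i : Fin (n + 2), ∑ x : ZMod (p ^ α), (if p ^ j ∣ x.val then (1:ℝ) else 0) := by
          rw [Finset.prod_univ_sum]
          rw [Fintype.piFinset_univ]
        rw [hpi, Finset.prod_const, Finset.card_univ, Fintype.card_fin]
        congr 1
        rw [Finset.sum_boole]
        rw [IidGenAux.count_dvd hp hj]
        push_cast
        ring
  -- final arithmetic
  have hps : (0:ℝ) < (p:ℝ) ^ (α * (n + 2)) := pow_pos hp0 _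
  rw [div_mul_eq_mul_div, one_mul, div_le_iff₀ hps]
  refine hsum.trans ?_
  set r : ℝ := ((p:ℝ) ^ 2)⁻¹ with hr
  have hr0 : (0:ℝ) ≤ r := by positivity
  have hp2 : (1:ℝ) < (p:ℝ) ^ 2 := by nlinarith
  have hr1 : r < 1 := by
    rw [hr]
    exact inv_lt_one_of_one_lt₀ hp2
  have hterm : ∀ j ∈ Finset.range (α + 1),
      (p : ℝ) ^ (j * n) * ((p:ℝ) ^ (α - j)) ^ (n + 2) =
      (p:ℝ) ^ (α * (n + 2)) * r ^ j := by
    intro j hj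
    rw [Finset.mem_range, Nat.lt_succ_iff] at hj
    have h2 : r ^ j = ((p:ℝ) ^ (2 * j))⁻¹ := by
      rw [hr, inv_pow, ← pow_mul]
    rw [h2, ← pow_mul, eq_mul_inv_iff_mul_eq₀ (by positivity), ← pow_add, ← pow_add]
    congr 1
    conv_rhs => rw [← Nat.sub_add_cancel hj]
    ring
  rw [Finset.sum_congr rfl hterm, ← Finset.mul_sum]
  have hgeom : ∑ j ∈ Finset.range (α + 1), r ^ j ≤ (1 - r)⁻¹ := by
    calc ∑ j ∈ Finset.range (α + 1), r ^ j ≤ ∑' j : ℕ, r ^ j :=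
          Summable.sum_le_tsum _ (fun i _ => pow_nonneg hr0 i)
            (summable_geometric_of_lt_one hr0 hr1)
      _ = (1 - r)⁻¹ := tsum_geometric_of_lt_one hr0 hr1
  have hexp : (1 - r)⁻¹ ≤ Real.exp (1 / ((p : ℝ) ^ 2 - 1)) := by
    have h1 : ((p:ℝ) ^ 2 - 1) ≠ 0 := sub_ne_zero.mpr hp2.ne'
    have h2 : ((p:ℝ) ^ 2) ≠ 0 := by positivity
    have heq : (1 - r)⁻¹ = 1 / ((p : ℝ) ^ 2 - 1) + 1 := by
      rw [hr, show (1 - ((p:ℝ) ^ 2)⁻¹) = ((p:ℝ) ^ 2 - 1) / (p:ℝ) ^ 2 by field_simp, inv_div]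
      rw [div_add' _ _ _ h1]
      congr 1
      ring
    rw [heq]
    exact Real.add_one_le_exp _
  calc (p:ℝ) ^ (α * (n + 2)) * ∑ j ∈ Finset.range (α + 1), r ^ j
      ≤ (p:ℝ) ^ (α * (n + 2)) * (1 - r)⁻¹ :=
        mul_le_mul_of_nonneg_left hgeom hps.le
    _ ≤ (p:ℝ) ^ (α * (n + 2)) * Real.exp (1 / ((p : ℝ) ^ 2 - 1)) :=
        mul_le_mul_of_nonneg_left hexp hps.le
    _ = Real.exp (1 / ((p : ℝ) ^ 2 - 1)) * (p:ℝ) ^ (α * (n + 2)) := mul_comm _ _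


end
end

section
/- Let n ∈ ℕ and let p be a prime. Then for every residue class x ∈ ℤ/pℤ, ∑_{k=0}^{n, k ≡ x mod p} C(n,k)/2^n ≤ min{2/p, 1/2} + q(n), where the sum is over those 0 ≤ k ≤ n whose image in ℤ/pℤ is x, C(n,k) is the binomial coefficient, and q(n) := max_{0 ≤ j ≤ n} C(n,j)/2^n. Equivalently, if S_n is a Binomial(n, 1/2) random variable, then max_{x ∈ ℤ} P(S_n ≡ x mod p) ≤ min{2/p, 1/2} + max_{j ∈ ℤ} P(S_n = j). -/
open scoped BigOperators
open scoped Classical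

noncomputable section

lemma my_choose_mono_half {n i j : ℕ} (hij : i ≤ j) (hj : j ≤ n / 2) :
    n.choose i ≤ n.choose j := by
  induction j with
  | zero => exact Nat.le_of_eq (by rw [Nat.le_zero.mp hij])
  | succ j ih =>
    rcases Nat.eq_or_lt_of_le hij with h | h
    · rw [h]
    · exact (ih (by omega) (by omega)).trans
        (Nat.choose_le_succ_of_lt_half_left (by omega))

lemma my_choose_anti_half {n i j : ℕ} (hi : n - n / 2 ≤ i) (hij : i ≤ j) (hj : j ≤ n) :
    n.choose j ≤ n.choose i := by
  rw [← Nat.choose_symm hj, ← Nat.choose_symm (hij.trans hj)]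
  exact my_choose_mono_half (by omega) (by omega)

/-- windows -/
def myW (a p k : ℕ) : Finset ℕ :=
  if k + p ≤ a + 1 then Finset.Ico k (k + p)
  else if k ≤ a then Finset.Ico k (a + 1)
  else if a + p ≤ k then Finset.Ico (k + 1 - p) (k + 1)
  else Finset.Ico (a + 1) (k + 1)

/-- deficits -/
def myd (a p k : ℕ) : ℕ :=
  if k + p ≤ a + 1 then 0
  else if k ≤ a then k + p - (a + 1)
  else if a + p ≤ k then 0
  else a + p - k

lemma my_key_bound (n p r : ℕ) (hp : 1 ≤ p) :
    p * ∑ k ∈ (Finset.range (n + 1)).filter (fun k => k % p = r), n.choose k ≤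
      2 ^ n + p * ((Finset.range (n + 1)).sup n.choose) := by
  classical
  set a := n / 2 with ha
  set M := (Finset.range (n + 1)).sup n.choose with hM
  set T := (Finset.range (n + 1)).filter (fun k => k % p = r) with hT
  have hTmem : ∀ k ∈ T, k ≤ n ∧ k % p = r := by
    intro k hk
    simp only [hT, Finset.mem_filter, Finset.mem_range] at hk
    omega
  have hgap : ∀ k ∈ T, ∀ k' ∈ T, k < k' → k + p ≤ k' := by
    intro k hk k' hk' hlt
    have h1 := (hTmem k hk).2
    have h2 := (hTmem k' hk').2
    have hdvd : p ∣ k' - k := (Nat.modEq_iff_dvd' hlt.le).mp (h1.trans h2.symm)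
    have := Nat.le_of_dvd (by omega) hdvd
    omega
  have hcard : ∀ k, (myW a p k).card + myd a p k = p := by
    intro k
    unfold myW myd
    split_ifs <;> rw [Nat.card_Ico] <;> omega
  have hmono : ∀ k ∈ T, ∀ j ∈ myW a p k, n.choose k ≤ n.choose j := by
    intro k hk j hj
    have hkn := (hTmem k hk).1
    unfold myW at hj
    split_ifs at hj with h1 h2 h3 <;> rw [Finset.mem_Ico] at hj
    · exact my_choose_mono_half hj.1 (by omega)
    · exact my_choose_mono_half hj.1 (by omega)
    · exact my_choose_anti_half (by omega) (by omega) hkn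
    · exact my_choose_anti_half (by omega) (by omega) hkn
  have hper : ∀ k ∈ T, p * n.choose k ≤ (∑ j ∈ myW a p k, n.choose j) + myd a p k * M := by
    intro k hk
    have h1 : (myW a p k).card * n.choose k ≤ ∑ j ∈ myW a p k, n.choose j := by
      have := Finset.card_nsmul_le_sum (myW a p k) (fun j => n.choose j) (n.choose k)
        (hmono k hk)
      simpa [smul_eq_mul] using this
    have h2 : n.choose k ≤ M :=
      Finset.le_sup (Finset.mem_range.mpr (Nat.lt_succ_of_le (hTmem k hk).1))
    calc p * n.choose k = (myW a p k).card * n.choose k + myd a p k * n.choose k := by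
          rw [← Nat.add_mul, hcard k]
      _ ≤ (∑ j ∈ myW a p k, n.choose j) + myd a p k * M :=
          Nat.add_le_add h1 (Nat.mul_le_mul_left _ h2)
  have hdisj : ∀ k ∈ T, ∀ k' ∈ T, k ≠ k' → Disjoint (myW a p k) (myW a p k') := by
    have key : ∀ k ∈ T, ∀ k' ∈ T, k < k' → Disjoint (myW a p k) (myW a p k') := by
      intro k hk k' hk' hlt
      have hg := hgap k hk k' hk' hlt
      rw [Finset.disjoint_left]
      intro j hj hj'
      unfold myW at hj hj'
      split_ifs at hj hj' <;> rw [Finset.mem_Ico] at hj hj' <;> omega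
    intro k hk k' hk' hne
    rcases Nat.lt_or_ge k k' with h | h
    · exact key k hk k' hk' h
    · exact (key k' hk' k hk (by omega)).symm
  have hsum1 : ∑ k ∈ T, ∑ j ∈ myW a p k, n.choose j ≤ 2 ^ n := by
    rw [← Finset.sum_biUnion (fun k hk k' hk' hne => hdisj k hk k' hk' hne)]
    calc ∑ j ∈ T.biUnion (myW a p), n.choose j
        ≤ ∑ j ∈ Finset.range (n + 1), n.choose j := by
          apply Finset.sum_le_sum_of_subset
          intro j hj
          rw [Finset.mem_biUnion] at hj
          obtain ⟨k, hk, hjk⟩ := hj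
          have hkn := (hTmem k hk).1
          unfold myW at hjk
          split_ifs at hjk <;> rw [Finset.mem_Ico] at hjk <;>
            (rw [Finset.mem_range]; omega)
      _ = 2 ^ n := Nat.sum_range_choose n
  have hmid : ∀ k, myd a p k ≠ 0 → a + 2 ≤ k + p ∧ k + 1 ≤ a + p := by
    intro k hk
    unfold myd at hk
    split_ifs at hk <;> omega
  have hdsum : ∑ k ∈ T, myd a p k ≤ p := by
    set Td := T.filter (fun k => myd a p k ≠ 0) with hTd
    have h1 : ∑ k ∈ T, myd a p k = ∑ k ∈ Td, myd a p k :=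
      (Finset.sum_filter_ne_zero T).symm
    rw [h1]
    rcases Finset.eq_empty_or_nonempty Td with he | hne
    · rw [he]; simp
    · set m := Td.min' hne with hm
      have hmT : m ∈ Td := Td.min'_mem hne
      have hmTd := Finset.mem_filter.mp hmT
      have hmmid := hmid m hmTd.2
      have hsub : Td ⊆ {m, m + p} := by
        intro k hk
        have hkT := Finset.mem_filter.mp hk
        have hkmid := hmid k hkT.2
        have hge : m ≤ k := Td.min'_le k hk
        rcases Nat.eq_or_lt_of_le hge with h | h
        · simp [← h]
        · have hg := hgap m hmTd.1 k hkT.1 h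
          have hdvd : p ∣ k - m := (Nat.modEq_iff_dvd' hge).mp
            ((hTmem m hmTd.1).2.trans (hTmem k hkT.1).2.symm)
          have halt : k - m = p ∨ 2 * p ≤ k - m := by
            obtain ⟨c, hc⟩ := hdvd
            match c, hc with
            | 0, hc => omega
            | 1, hc => left; omega
            | (c + 2), hc =>
              right
              have h2 : p * 2 ≤ p * (c + 2) := Nat.mul_le_mul_left p (by omega)
              omega
          rw [Finset.mem_insert, Finset.mem_singleton]
          omega
      calc ∑ k ∈ Td, myd a p k ≤ ∑ k ∈ ({m, m + p} : Finset ℕ), myd a p k :=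
            Finset.sum_le_sum_of_subset hsub
        _ = myd a p m + myd a p (m + p) := Finset.sum_pair (by omega)
        _ ≤ p := by
            unfold myd
            split_ifs <;> omega
  calc p * ∑ k ∈ T, n.choose k = ∑ k ∈ T, p * n.choose k := by rw [Finset.mul_sum]
    _ ≤ ∑ k ∈ T, ((∑ j ∈ myW a p k, n.choose j) + myd a p k * M) :=
        Finset.sum_le_sum hper
    _ = (∑ k ∈ T, ∑ j ∈ myW a p k, n.choose j) + (∑ k ∈ T, myd a p k) * M := by
        rw [Finset.sum_add_distrib, Finset.sum_mul]
    _ ≤ 2 ^ n + p * M :=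
        Nat.add_le_add hsum1 (Nat.mul_le_mul_right _ hdsum)

/-- Lemma `lazyRW_modp`: for a Binomial(n,1/2) random variable `S_n` and a
prime `p`, `max_x P(S_n ≡ x mod p) ≤ min{2/p, 1/2} + max_j P(S_n = j)`. -/
theorem binomial_mod_p_bound (n p : ℕ) (hp : p.Prime) (x : ZMod p) :
    (∑ k ∈ (Finset.range (n + 1)).filter (fun k : ℕ => ((k : ZMod p) = x)),
        (n.choose k : ℝ)) / 2 ^ n ≤
      min (2 / (p : ℝ)) (1 / 2) +
        (((Finset.range (n + 1)).sup (n.choose) : ℕ) : ℝ) / 2 ^ n := by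
  have hp2 : 2 ≤ p := hp.two_le
  haveI : NeZero p := ⟨by omega⟩
  have hsets : (Finset.range (n + 1)).filter (fun k : ℕ => ((k : ZMod p) = x)) =
      (Finset.range (n + 1)).filter (fun k => k % p = x.val) := by
    apply Finset.filter_congr
    intro k _
    rw [show x = ((x.val : ℕ) : ZMod p) from (ZMod.natCast_zmod_val x).symm,
      ZMod.natCast_eq_natCast_iff', Nat.mod_eq_of_lt (ZMod.val_lt x),
      ZMod.val_natCast, Nat.mod_eq_of_lt (ZMod.val_lt x)]
  set S := ∑ k ∈ (Finset.range (n + 1)).filter (fun k => k % p = x.val), n.choose k with hS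
  set M := (Finset.range (n + 1)).sup n.choose with hM
  have key := my_key_bound n p x.val (by omega)
  rw [← hS, ← hM] at key
  have keyR : (p : ℝ) * S ≤ 2 ^ n + p * M := by exact_mod_cast key
  have hLHS : (∑ k ∈ (Finset.range (n + 1)).filter (fun k : ℕ => ((k : ZMod p) = x)),
      (n.choose k : ℝ)) = (S : ℝ) := by
    rw [hsets, hS]
    push_cast
    rfl
  rw [hLHS]
  have h2n : (0 : ℝ) < 2 ^ n := by positivity
  have hpR : (0 : ℝ) < p := by exact_mod_cast (by omega : 0 < p)
  have hmin : 1 / (p : ℝ) ≤ min (2 / (p : ℝ)) (1 / 2) := by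
    apply le_min
    · gcongr
      norm_num
    · rw [div_le_div_iff₀ hpR (by norm_num : (0:ℝ) < 2)]
      have : (2 : ℝ) ≤ p := by exact_mod_cast hp2
      linarith
  have hgoal1 : (S : ℝ) / 2 ^ n ≤ 1 / p + (M : ℝ) / 2 ^ n := by
    rw [div_add_div _ _ hpR.ne' h2n.ne', div_le_div_iff₀ h2n (by positivity)]
    nlinarith [keyR, h2n.le]
  calc (S : ℝ) / 2 ^ n ≤ 1 / p + (M : ℝ) / 2 ^ n := hgoal1
    _ ≤ min (2 / (p : ℝ)) (1 / 2) + (M : ℝ) / 2 ^ n := by linarith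


end
end
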